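/- Let F be a field, A and B finite-dimensional associative unital F-algebras, C a subalgebra of A, and D a subalgebra of B. Then the centralizer of the image of C ⊗_F D in A ⊗_F B equals the image of Z_A(C) ⊗_F Z_B(D) in A ⊗_F B, where Z_A(C) denotes the centralizer of C in A and Z_B(D) the centralizer of D in B; moreover the natural map Z_A(C) ⊗_F Z_B(D) → A ⊗_F B is injective. -/

import Mathlib

open scoped TensorProduct

set_option maxHeartbeats 1000000
set_option synthInstance.maxHeartbeats 400000

section Aux

variable {F A B : Type*} [Field F] [Ring A] [Algebra F A] [Ring B] [Algebra F B]

/-- The tensor product of two injective algebra maps over a field is injective. -/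
theorem tmap_injective {A' B' : Type*} [Ring A'] [Algebra F A'] [Ring B'] [Algebra F B']
    (f : A' →ₐ[F] A) (g : B' →ₐ[F] B) (hf : Function.Injective f) (hg : Function.Injective g) :
    Function.Injective (Algebra.TensorProduct.map f g) := by
  have h1 : Function.Injective (f.toLinearMap.rTensor B') :=
    Module.Flat.rTensor_preserves_injective_linearMap _ hf
  have h2 : Function.Injective (g.toLinearMap.lTensor A) :=
    Module.Flat.lTensor_preserves_injective_linearMap _ hg
  have key : ⇑(Algebra.TensorProduct.map f g) =
      ⇑(TensorProduct.map f.toLinearMap g.toLinearMap) := by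
    funext z
    induction z using TensorProduct.induction_on with
    | zero => simp
    | tmul a b => simp
    | add u v hu hv => simp [map_add, hu, hv]
  rw [key, ← LinearMap.lTensor_comp_rTensor]
  exact h2.comp h1

theorem aux_left (C : Subalgebra F A) (x : A ⊗[F] B)
    (hx : ∀ c ∈ C, (c ⊗ₜ[F] (1 : B)) * x = x * (c ⊗ₜ[F] (1 : B))) :
    x ∈ (Algebra.TensorProduct.map (Subalgebra.centralizer F (C : Set A)).val
      (AlgHom.id F B)).range := by
  classical
  set ZA := Subalgebra.centralizer F (C : Set A) with hZA
  let ι := Module.Free.ChooseBasisIndex F B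
  let b : Module.Basis ι F B := Module.Free.chooseBasis F B
  let e : A ⊗[F] B ≃ₗ[F] (ι →₀ A) :=
    (TensorProduct.congr (LinearEquiv.refl F A) b.repr).trans
      (TensorProduct.finsuppScalarRight F F A ι)
  have e_tmul : ∀ (a : A) (y : B) (j : ι), e (a ⊗ₜ[F] y) j = b.repr y j • a := by
    intro a y j
    simp [e]
  have f1 : ∀ (c : A) (y : A ⊗[F] B) (j : ι),
      e ((c ⊗ₜ[F] (1 : B)) * y) j = c * e y j := by
    intro c y j
    induction y using TensorProduct.induction_on with
    | zero => simp
    | tmul a y' =>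
      rw [Algebra.TensorProduct.tmul_mul_tmul, one_mul, e_tmul, e_tmul, mul_smul_comm]
    | add u v hu hv => rw [mul_add, map_add, Finsupp.add_apply, hu, hv,
        map_add, Finsupp.add_apply, mul_add]
  have f2 : ∀ (c : A) (y : A ⊗[F] B) (j : ι),
      e (y * (c ⊗ₜ[F] (1 : B))) j = e y j * c := by
    intro c y j
    induction y using TensorProduct.induction_on with
    | zero => simp
    | tmul a y' =>
      rw [Algebra.TensorProduct.tmul_mul_tmul, mul_one, e_tmul, e_tmul, smul_mul_assoc]
    | add u v hu hv => rw [add_mul, map_add, Finsupp.add_apply, hu, hv,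
        map_add, Finsupp.add_apply, add_mul]
  have hmem : ∀ j : ι, e x j ∈ ZA := by
    intro j
    rw [hZA, Subalgebra.mem_centralizer_iff]
    intro c hc
    rw [← f1 c x j, ← f2 c x j, hx c hc]
  have e_symm_single : ∀ (j : ι) (a : A),
      e.symm (Finsupp.single j a) = a ⊗ₜ[F] b j := by
    intro j a
    simp [e, TensorProduct.congr, Module.Basis.repr_symm_single_one]
  refine ⟨(e x).support.sum (fun j => (⟨e x j, hmem j⟩ : ZA) ⊗ₜ[F] b j), ?_⟩
  have key : ∀ j ∈ (e x).support,
      Algebra.TensorProduct.map ZA.val (AlgHom.id F B) ((⟨e x j, hmem j⟩ : ZA) ⊗ₜ[F] b j)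
        = e.symm (Finsupp.single j (e x j)) := by
    intro j _
    rw [Algebra.TensorProduct.map_tmul, e_symm_single]
    rfl
  calc Algebra.TensorProduct.map ZA.val (AlgHom.id F B)
        ((e x).support.sum (fun j => (⟨e x j, hmem j⟩ : ZA) ⊗ₜ[F] b j))
      = ∑ j ∈ (e x).support, e.symm (Finsupp.single j (e x j)) := by
        rw [map_sum]; exact Finset.sum_congr rfl key
    _ = x := by
        rw [← map_sum, ← Finsupp.sum, Finsupp.sum_single, LinearEquiv.symm_apply_apply]

theorem aux_right (D : Subalgebra F B) (x : A ⊗[F] B)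
    (hx : ∀ d ∈ D, ((1 : A) ⊗ₜ[F] d) * x = x * ((1 : A) ⊗ₜ[F] d)) :
    x ∈ (Algebra.TensorProduct.map (AlgHom.id F A)
      (Subalgebra.centralizer F (D : Set B)).val).range := by
  set ZB := Subalgebra.centralizer F (D : Set B)
  let κ := Algebra.TensorProduct.comm F A B
  have hy : ∀ d ∈ D, (d ⊗ₜ[F] (1 : A)) * κ x = κ x * (d ⊗ₜ[F] (1 : A)) := by
    intro d hd
    have h := congrArg κ (hx d hd)
    rw [map_mul, map_mul, Algebra.TensorProduct.comm_tmul] at h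
    exact h
  obtain ⟨v, hv⟩ := aux_left D (κ x) hy
  replace hv : Algebra.TensorProduct.map ZB.val (AlgHom.id F A) v = κ x := hv
  refine ⟨Algebra.TensorProduct.comm F (↥ZB) A v, ?_⟩
  show Algebra.TensorProduct.map (AlgHom.id F A) ZB.val
      (Algebra.TensorProduct.comm F (↥ZB) A v) = x
  have nat : ∀ w : ↥ZB ⊗[F] A,
      κ (Algebra.TensorProduct.map (AlgHom.id F A) ZB.val
        (Algebra.TensorProduct.comm F (↥ZB) A w))
        = Algebra.TensorProduct.map ZB.val (AlgHom.id F A) w := by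
    intro w
    induction w using TensorProduct.induction_on with
    | zero => simp
    | tmul z a => simp [κ]
    | add u w hu hw => simp only [map_add, hu, hw]
  apply κ.injective
  rw [nat v, hv]

end Aux

theorem centralizer_tensor_centralizer
    (F A B : Type*) [Field F]
    [Ring A] [Algebra F A] [FiniteDimensional F A]
    [Ring B] [Algebra F B] [FiniteDimensional F B]
    (C : Subalgebra F A) (D : Subalgebra F B) :
    Subalgebra.centralizer F
        (((Algebra.TensorProduct.map C.val D.val).range : Subalgebra F (A ⊗[F] B)) :
          Set (A ⊗[F] B)) =
      (Algebra.TensorProduct.map (Subalgebra.centralizer F (C : Set A)).val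
          (Subalgebra.centralizer F (D : Set B)).val).range ∧
    Function.Injective
      (Algebra.TensorProduct.map (Subalgebra.centralizer F (C : Set A)).val
        (Subalgebra.centralizer F (D : Set B)).val) := by
  set ZA := Subalgebra.centralizer F (C : Set A) with hZA
  set ZB := Subalgebra.centralizer F (D : Set B) with hZB
  have hinj : Function.Injective (Algebra.TensorProduct.map ZA.val ZB.val) :=
    tmap_injective _ _ Subtype.val_injective Subtype.val_injective
  refine ⟨?_, hinj⟩
  apply le_antisymm
  · -- hard direction
    intro x hx
    rw [Subalgebra.mem_centralizer_iff] at hx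
    -- x commutes with c ⊗ 1
    have hxC : ∀ c ∈ C, (c ⊗ₜ[F] (1 : B)) * x = x * (c ⊗ₜ[F] (1 : B)) := by
      intro c hc
      have : (c ⊗ₜ[F] (1 : B)) ∈ ((Algebra.TensorProduct.map C.val D.val).range :
          Subalgebra F (A ⊗[F] B)) := ⟨(⟨c, hc⟩ : C) ⊗ₜ[F] (1 : D), by simp⟩
      exact hx _ this
    have hxD : ∀ d ∈ D, ((1 : A) ⊗ₜ[F] d) * x = x * ((1 : A) ⊗ₜ[F] d) := by
      intro d hd
      have : ((1 : A) ⊗ₜ[F] d) ∈ ((Algebra.TensorProduct.map C.val D.val).range :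
          Subalgebra F (A ⊗[F] B)) := ⟨(1 : C) ⊗ₜ[F] (⟨d, hd⟩ : D), by simp⟩
      exact hx _ this
    obtain ⟨u, hu⟩ := aux_left C x hxC
    replace hu : Algebra.TensorProduct.map ZA.val (AlgHom.id F B) u = x := hu
    have hΦ₁ : Function.Injective (Algebra.TensorProduct.map ZA.val (AlgHom.id F B)) :=
      tmap_injective _ _ Subtype.val_injective Function.injective_id
    have huD : ∀ d ∈ D, ((1 : ZA) ⊗ₜ[F] d) * u = u * ((1 : ZA) ⊗ₜ[F] d) := by
      intro d hd
      apply hΦ₁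
      have h1 : Algebra.TensorProduct.map ZA.val (AlgHom.id F B) ((1 : ZA) ⊗ₜ[F] d)
          = (1 : A) ⊗ₜ[F] d := by simp
      rw [map_mul, map_mul, h1, hu, hxD d hd]
    obtain ⟨v, hv⟩ := aux_right D u huD
    replace hv : Algebra.TensorProduct.map (AlgHom.id F ↥ZA) ZB.val v = u := hv
    refine ⟨v, ?_⟩
    show Algebra.TensorProduct.map ZA.val ZB.val v = x
    have hcomp : Algebra.TensorProduct.map ZA.val ZB.val =
        (Algebra.TensorProduct.map ZA.val (AlgHom.id F B)).comp
          (Algebra.TensorProduct.map (AlgHom.id F ↥ZA) ZB.val) := by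
      rw [← Algebra.TensorProduct.map_comp, AlgHom.comp_id, AlgHom.id_comp]
    rw [hcomp, AlgHom.comp_apply, hv, hu]
  · -- easy direction
    rintro _ ⟨w, rfl⟩
    rw [Subalgebra.mem_centralizer_iff]
    rintro _ ⟨t, rfl⟩
    induction t using TensorProduct.induction_on with
    | zero => simp
    | tmul c d =>
      induction w using TensorProduct.induction_on with
      | zero => simp
      | tmul a bb =>
        have ha : (c : A) * (a : A) = (a : A) * (c : A) :=
          (Subalgebra.mem_centralizer_iff F).mp a.2 c c.2
        have hb : (d : B) * (bb : B) = (bb : B) * (d : B) :=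
          (Subalgebra.mem_centralizer_iff F).mp bb.2 d d.2
        show ((c : A) ⊗ₜ[F] (d : B)) * ((a : A) ⊗ₜ[F] (bb : B)) =
            ((a : A) ⊗ₜ[F] (bb : B)) * ((c : A) ⊗ₜ[F] (d : B))
        rw [Algebra.TensorProduct.tmul_mul_tmul, Algebra.TensorProduct.tmul_mul_tmul, ha, hb]
      | add u w hu hw => simp only [map_add, add_mul, mul_add, hu, hw]
    | add t s ht hs => simp only [map_add, add_mul, mul_add, ht, hs]
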